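/- For every integer k ≥ 1, every finite simple graph on at least 2^k − 1 vertices contains the edgeless graph on some k of its vertices as a vertex-minor. Equivalently, the vertex-minor Ramsey number satisfies R_vm(k) ≤ 2^k − 1. -/

import Mathlib

open Finset

variable {V : Type*}

/-- Local complementation at `v`: complement the induced subgraph on the
neighborhood of `v`. -/
def localComp (G : SimpleGraph V) (v : V) : SimpleGraph V where
  Adj u w := (G.Adj v u ∧ G.Adj v w ∧ u ≠ w ∧ ¬ G.Adj u w) ∨
    (¬ (G.Adj v u ∧ G.Adj v w) ∧ G.Adj u w)
  symm := by
    refine ⟨?_⟩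
    intro u w h
    rcases h with ⟨h1, h2, h3, h4⟩ | ⟨h1, h2⟩
    · exact Or.inl ⟨h2, h1, h3.symm, fun a => h4 a.symm⟩
    · exact Or.inr ⟨fun hc => h1 ⟨hc.2, hc.1⟩, h2.symm⟩
  loopless := by
    refine ⟨?_⟩
    rintro u (⟨-, -, h, -⟩ | ⟨-, h⟩)
    · exact h rfl
    · exact G.loopless.irrefl u h

/-- Pivot at an edge `uv`: `G × uv = G * u * v * u`. -/
def pivotGraph (G : SimpleGraph V) (u v : V) : SimpleGraph V :=
  localComp (localComp (localComp G u) v) u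

/-- Delete a vertex from a graph. -/
def deleteVertex (G : SimpleGraph V) (v : V) : SimpleGraph V where
  Adj a b := G.Adj a b ∧ a ≠ v ∧ b ≠ v
  symm := ⟨fun _ _ h => ⟨h.1.symm, h.2.2, h.2.1⟩⟩
  loopless := ⟨fun a h => G.loopless.irrefl a h.1⟩

/-- One step of forming a vertex-minor.  A "partial graph" is a pair of a
vertex set together with a graph on those vertices: one may locally complement
at a vertex of the current vertex set, or delete a vertex of it. -/
inductive VMStep [DecidableEq V] : Finset V × SimpleGraph V → Finset V × SimpleGraph V → Prop
  | lc (S : Finset V) (G : SimpleGraph V) (v : V) (hv : v ∈ S) :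
      VMStep (S, G) (S, localComp G v)
  | del (S : Finset V) (G : SimpleGraph V) (v : V) (hv : v ∈ S) :
      VMStep (S, G) (S.erase v, deleteVertex G v)

/-- `Q = (U, H)` is obtained from `P = (S, G)` by a sequence of local
complementations and vertex deletions, exactly as a labeled graph. -/
def IsVertexMinor [DecidableEq V] (P Q : Finset V × SimpleGraph V) : Prop :=
  Relation.ReflTransGen VMStep P Q

set_option linter.unusedSectionVars false

section Aux

-- chi machinery
open Classical in
noncomputable def chi (P : Prop) : ZMod 2 := if P then 1 else 0

lemma chi_pos {P : Prop} (h : P) : chi P = 1 := by simp [chi, h]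
lemma chi_neg {P : Prop} (h : ¬P) : chi P = 0 := by simp [chi, h]
lemma chi_and (P Q : Prop) : chi (P ∧ Q) = chi P * chi Q := by
  by_cases hP : P <;> by_cases hQ : Q <;> simp [chi, hP, hQ]
lemma chi_congr {P Q : Prop} (h : P ↔ Q) : chi P = chi Q := by
  by_cases hP : P
  · rw [chi_pos hP, chi_pos (h.mp hP)]
  · rw [chi_neg hP, chi_neg (fun q => hP (h.mpr q))]

lemma zmod2_cases (x : ZMod 2) : x = 0 ∨ x = 1 := by revert x; decide

lemma zmod2_add_self (x : ZMod 2) : x + x = 0 := by fin_cases x <;> decide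

section dpar
variable [DecidableEq V]

noncomputable def dpar (G : SimpleGraph V) (Z : Finset V) (w : V) : ZMod 2 :=
  ∑ z ∈ Z, chi (G.Adj w z)

omit [DecidableEq V] in
lemma dpar_exists_adj {G : SimpleGraph V} {Z : Finset V} {w : V}
    (h : dpar G Z w ≠ 0) : ∃ z ∈ Z, G.Adj w z := by
  by_contra hc
  push_neg at hc
  exact h (Finset.sum_eq_zero fun z hz => chi_neg (hc z hz))

lemma dpar_erase {G : SimpleGraph V} {Z : Finset V} {u : V} (hu : u ∈ Z) (w : V) :
    dpar G (Z.erase u) w = dpar G Z w + chi (G.Adj w u) := by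
  have h := Finset.sum_erase_add Z (fun z => chi (G.Adj w z)) hu
  unfold dpar
  rw [← h]
  rw [add_assoc, zmod2_add_self, add_zero]

lemma sum_chi_eq (X : Finset V) (w : V) : (∑ z ∈ X, chi (w = z)) = chi (w ∈ X) := by
  by_cases hw : w ∈ X
  · rw [← Finset.sum_erase_add X _ hw, chi_pos rfl, chi_pos hw]
    rw [Finset.sum_eq_zero (fun z hz => chi_neg (fun he => Finset.ne_of_mem_erase hz he.symm)), zero_add]
  · rw [Finset.sum_eq_zero (fun z hz => chi_neg (fun h => hw (by rw [h]; exact hz))), chi_neg hw]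


-- pointwise LC identity
lemma chi_localComp_adj (G : SimpleGraph V) (u w z : V) :
    chi ((localComp G u).Adj w z)
      = chi (G.Adj w z) + chi (G.Adj u w) * chi (G.Adj u z) + chi (w = z) * chi (G.Adj u w) := by
  by_cases hwz : w = z
  · subst hwz
    rw [chi_neg ((localComp G u).loopless.irrefl w), chi_neg (G.loopless.irrefl w), chi_pos rfl, one_mul]
    rcases zmod2_cases (chi (G.Adj u w)) with h | h <;> rw [h] <;> decide
  · have hlc : (localComp G u).Adj w z ↔
        ((G.Adj u w ∧ G.Adj u z ∧ w ≠ z ∧ ¬ G.Adj w z) ∨ (¬ (G.Adj u w ∧ G.Adj u z) ∧ G.Adj w z)) :=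
      Iff.rfl
    rw [chi_neg hwz, zero_mul, add_zero]
    by_cases h1 : G.Adj u w <;> by_cases h2 : G.Adj u z <;> by_cases h3 : G.Adj w z <;>
      simp only [chi_pos, chi_neg, h1, h2, h3, hwz, hlc, not_true, not_false_iff, and_true,
        true_and, false_and, and_false, ne_eq, not_not] <;>
      first
        | (rw [chi_pos (by tauto)]; decide)
        | (rw [chi_neg (by tauto)]; decide)

-- master sum lemma
lemma dpar_localComp (G : SimpleGraph V) (u : V) (X : Finset V) (w : V) :
    dpar (localComp G u) X w
      = dpar G X w + chi (G.Adj u w) * (dpar G X u + chi (w ∈ X)) := by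
  unfold dpar
  have : ∀ z ∈ X, chi ((localComp G u).Adj w z)
      = chi (G.Adj w z) + chi (G.Adj u w) * chi (G.Adj u z) + chi (w = z) * chi (G.Adj u w) :=
    fun z _ => chi_localComp_adj G u w z
  rw [Finset.sum_congr rfl this]
  rw [Finset.sum_add_distrib, Finset.sum_add_distrib, ← Finset.mul_sum]
  have h2 : (∑ z ∈ X, chi (w = z) * chi (G.Adj u w)) = chi (w ∈ X) * chi (G.Adj u w) := by
    rw [← Finset.sum_mul, sum_chi_eq]
  rw [h2]
  ring
variable [Fintype V]

noncomputable def DGs (G : SimpleGraph V) (Z : Finset V) : Finset V :=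
  Finset.univ.filter (fun w => dpar G Z w = 1)

lemma mem_DGs {G : SimpleGraph V} {Z : Finset V} {w : V} :
    w ∈ DGs G Z ↔ dpar G Z w = 1 := by
  simp [DGs]

lemma not_mem_DGs {G : SimpleGraph V} {Z : Finset V} {w : V}
    (h : w ∉ DGs G Z) : dpar G Z w = 0 := by
  rcases zmod2_cases (dpar G Z w) with h0 | h1
  · exact h0
  · exact absurd (mem_DGs.mpr h1) h

-- step lemma, u not in DGs
lemma step_not_mem {G : SimpleGraph V} {Z : Finset V} {u : V} (hu : u ∉ DGs G Z) (b : V) :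
    dpar (localComp G u) Z b = dpar G Z b + chi (G.Adj u b) * chi (b ∈ Z) := by
  rw [dpar_localComp, not_mem_DGs hu, zero_add]

-- step lemma, u in DGs
lemma step_mem {G : SimpleGraph V} {Z : Finset V} {u : V} (hu : u ∈ DGs G Z) (huZ : u ∈ Z) (b : V) :
    dpar (localComp G u) (Z.erase u) b = dpar G Z b + chi (G.Adj u b) * chi (b ∈ Z) := by
  rw [dpar_localComp, dpar_erase huZ, dpar_erase huZ]
  rw [chi_neg (G.loopless.irrefl u), add_zero, mem_DGs.mp hu]
  by_cases hbu : b = u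
  · subst hbu
    rw [chi_neg (G.loopless.irrefl b)]
    ring
  · have h1 : chi (G.Adj b u) = chi (G.Adj u b) := chi_congr ⟨fun h => h.symm, fun h => h.symm⟩
    have h2 : chi (b ∈ Z.erase u) = chi (b ∈ Z) := chi_congr (by
      constructor
      · exact fun h => Finset.mem_of_mem_erase h
      · exact fun h => Finset.mem_erase.mpr ⟨hbu, h⟩)
    rw [h1, h2]
    rcases zmod2_cases (dpar G Z b) with h | h <;>
    rcases zmod2_cases (chi (G.Adj u b)) with h' | h' <;>
    rcases zmod2_cases (chi (b ∈ Z)) with h'' | h'' <;>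
      rw [h, h', h''] <;> decide

-- additivity over symmDiff
lemma dpar_symmDiff (G : SimpleGraph V) (X Y : Finset V) (w : V) :
    dpar G (symmDiff X Y) w = dpar G X w + dpar G Y w := by
  classical
  unfold dpar
  have hsub : X ∩ Y ⊆ X ∪ Y := (Finset.inter_subset_left).trans Finset.subset_union_left
  have h1 : (∑ z ∈ (X ∪ Y) \ (X ∩ Y), chi (G.Adj w z)) + (∑ z ∈ X ∩ Y, chi (G.Adj w z))
      = ∑ z ∈ X ∪ Y, chi (G.Adj w z) := Finset.sum_sdiff hsub
  have h2 : (∑ z ∈ X ∪ Y, chi (G.Adj w z)) + (∑ z ∈ X ∩ Y, chi (G.Adj w z))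
      = (∑ z ∈ X, chi (G.Adj w z)) + (∑ z ∈ Y, chi (G.Adj w z)) := Finset.sum_union_inter
  have hsd : symmDiff X Y = (X ∪ Y) \ (X ∩ Y) := by
    ext x
    simp [Finset.mem_symmDiff, Finset.mem_sdiff, Finset.mem_union, Finset.mem_inter]
    tauto
  rw [hsd]
  have := zmod2_add_self (∑ z ∈ X ∩ Y, chi (G.Adj w z))
  -- from h1, h2 derive
  have key : (∑ z ∈ (X ∪ Y) \ (X ∩ Y), chi (G.Adj w z))
      = (∑ z ∈ X, chi (G.Adj w z)) + (∑ z ∈ Y, chi (G.Adj w z)) := by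
    calc (∑ z ∈ (X ∪ Y) \ (X ∩ Y), chi (G.Adj w z))
        = (∑ z ∈ (X ∪ Y) \ (X ∩ Y), chi (G.Adj w z)) + ((∑ z ∈ X ∩ Y, chi (G.Adj w z)) + (∑ z ∈ X ∩ Y, chi (G.Adj w z))) := by rw [this, add_zero]
      _ = ((∑ z ∈ (X ∪ Y) \ (X ∩ Y), chi (G.Adj w z)) + (∑ z ∈ X ∩ Y, chi (G.Adj w z))) + (∑ z ∈ X ∩ Y, chi (G.Adj w z)) := by ring
      _ = (∑ z ∈ X ∪ Y, chi (G.Adj w z)) + (∑ z ∈ X ∩ Y, chi (G.Adj w z)) := by rw [h1]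
      _ = (∑ z ∈ X, chi (G.Adj w z)) + (∑ z ∈ Y, chi (G.Adj w z)) := h2
  exact key
def EdgesIn (G : SimpleGraph V) (S : Finset V) : Prop :=
  ∀ ⦃a b : V⦄, G.Adj a b → a ∈ S ∧ b ∈ S

lemma edgesIn_localComp {G : SimpleGraph V} {S : Finset V} (hE : EdgesIn G S) (u : V) :
    EdgesIn (localComp G u) S := by
  rintro a b (⟨h1, h2, -, -⟩ | ⟨-, h⟩)
  · exact ⟨(hE h1).2, (hE h2).2⟩
  · exact hE h

lemma edgesIn_deleteVertex {G : SimpleGraph V} {S : Finset V} (hE : EdgesIn G S) (v : V) :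
    EdgesIn (deleteVertex G v) (S.erase v) := by
  rintro a b (⟨h, ha, hb⟩ : G.Adj a b ∧ a ≠ v ∧ b ≠ v)
  exact ⟨Finset.mem_erase.mpr ⟨ha, (hE h).1⟩, Finset.mem_erase.mpr ⟨hb, (hE h).2⟩⟩

lemma edgesIn_empty_eq_bot {G : SimpleGraph V} (hE : EdgesIn G (∅ : Finset V)) :
    G = ⊥ := by
  ext a b
  simp only [SimpleGraph.bot_adj, iff_false]
  intro h
  exact absurd (hE h).1 (Finset.notMem_empty a)

lemma DGs_subset_of_edgesIn {G : SimpleGraph V} {S : Finset V} (hE : EdgesIn G S)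
    (Z : Finset V) : DGs G Z ⊆ S := by
  intro w hw
  obtain ⟨z, _, hadj⟩ := dpar_exists_adj (by rw [mem_DGs.mp hw]; exact one_ne_zero)
  exact (hE hadj).1

-- pigeonhole
lemma pigeon {G : SimpleGraph V} {S T : Finset V} (hE : EdgesIn G S) (hTS : T ⊆ S)
    (hcard : 2 * (S.card - T.card) < S.card) :
    ∃ Z : Finset V, Z.Nonempty ∧ Z ⊆ T ∧ DGs G Z ⊆ T := by
  classical
  set R : Finset V := S \ T with hR
  have hr : R.card = S.card - T.card := Finset.card_sdiff_of_subset hTS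
  set f : Finset V → Finset V × Finset V := fun X => (X ∩ R, DGs G X ∩ R) with hf
  have hmaps : ∀ X ∈ S.powerset, f X ∈ R.powerset ×ˢ R.powerset := by
    intro X _
    simp only [hf, Finset.mem_product, Finset.mem_powerset]
    exact ⟨Finset.inter_subset_right, Finset.inter_subset_right⟩
  have hlt : (R.powerset ×ˢ R.powerset).card < S.powerset.card := by
    simp only [Finset.card_product, Finset.card_powerset]
    calc 2 ^ R.card * 2 ^ R.card = 2 ^ (R.card + R.card) := (pow_add 2 _ _).symm
      _ < 2 ^ S.card := by
          apply Nat.pow_lt_pow_right (by norm_num)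
          omega
  obtain ⟨X, hX, X', hX', hne, heq⟩ :=
    Finset.exists_ne_map_eq_of_card_lt_of_maps_to hlt hmaps
  have h1 : X ∩ R = X' ∩ R := congrArg Prod.fst heq
  have h2 : DGs G X ∩ R = DGs G X' ∩ R := congrArg Prod.snd heq
  rw [Finset.mem_powerset] at hX hX'
  refine ⟨symmDiff X X', ?_, ?_, ?_⟩
  · rw [Finset.nonempty_iff_ne_empty]
    intro hcon
    exact hne (symmDiff_eq_bot.mp hcon)
  · intro x hx
    rw [Finset.mem_symmDiff] at hx
    by_contra hxT
    have hxR : x ∈ R := by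
      rw [hR, Finset.mem_sdiff]
      rcases hx with ⟨hxX, -⟩ | ⟨hxX, -⟩
      · exact ⟨hX hxX, hxT⟩
      · exact ⟨hX' hxX, hxT⟩
    have : (x ∈ X ∩ R) ↔ (x ∈ X' ∩ R) := by rw [h1]
    simp only [Finset.mem_inter, hxR, and_true] at this
    tauto
  · intro b hb
    have hd : dpar G (symmDiff X X') b = 1 := mem_DGs.mp hb
    rw [dpar_symmDiff] at hd
    have hbS : b ∈ S := by
      have hne0 : dpar G (symmDiff X X') b ≠ 0 := by
        rw [dpar_symmDiff, hd]; exact one_ne_zero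
      obtain ⟨z, -, hadj⟩ := dpar_exists_adj hne0
      exact (hE hadj).1
    by_contra hbT
    have hbR : b ∈ R := by rw [hR, Finset.mem_sdiff]; exact ⟨hbS, hbT⟩
    have hiff : (b ∈ DGs G X) ↔ (b ∈ DGs G X') := by
      have : (b ∈ DGs G X ∩ R) ↔ (b ∈ DGs G X' ∩ R) := by rw [h2]
      simp only [Finset.mem_inter, hbR, and_true] at this
      exact this
    rcases zmod2_cases (dpar G X b) with h | h <;> rcases zmod2_cases (dpar G X' b) with h' | h'
    · rw [h, h'] at hd; exact absurd hd (by decide)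
    · exact absurd (hiff.mpr (mem_DGs.mpr h')) (by rw [mem_DGs, h]; decide)
    · exact absurd (hiff.mp (mem_DGs.mpr h)) (by rw [mem_DGs, h']; decide)
    · rw [h, h'] at hd; exact absurd hd (by decide)
section main
variable [DecidableEq V] [Fintype V]

/-- The local-complementation reduction process. -/
lemma proc (S A : Finset V) (hSA : S ⊆ A) :
    ∀ (n : ℕ) (G : SimpleGraph V) (Z : Finset V), Z.card ≤ n → Z.Nonempty →
      EdgesIn G S → Z ⊆ S →
      ∃ (H : SimpleGraph V) (v : V),
        Relation.ReflTransGen VMStep (A, G) (A, H) ∧ EdgesIn H S ∧ v ∈ Z ∧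
        ∀ b, H.Adj v b → b ∈ Z ∨ b ∈ DGs G Z := by
  intro n
  induction n with
  | zero =>
    intro G Z hcard hne _ _
    obtain ⟨z, hz⟩ := hne
    exact absurd (Finset.card_pos.mpr ⟨z, hz⟩) (by omega)
  | succ n ih =>
    intro G Z hcard hne hE hZS
    obtain ⟨u, huZ⟩ := hne
    by_cases hY : u ∈ DGs G Z
    · -- case A : single local complementation at u
      have hd1 : dpar G Z u = 1 := mem_DGs.mp hY
      obtain ⟨z₀, hz₀Z, hz₀adj⟩ := dpar_exists_adj (by rw [hd1]; exact one_ne_zero)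
      have hz₀u : z₀ ≠ u := fun h => G.loopless.irrefl u (h ▸ hz₀adj)
      set G₁ := localComp G u with hG₁
      set Z₁ := Z.erase u with hZ₁
      have hZ₁ne : Z₁.Nonempty := ⟨z₀, Finset.mem_erase.mpr ⟨hz₀u, hz₀Z⟩⟩
      have hZ₁card : Z₁.card ≤ n := by
        rw [hZ₁, Finset.card_erase_of_mem huZ]; omega
      obtain ⟨H, v, hchain, hEH, hvZ, hb⟩ :=
        ih G₁ Z₁ hZ₁card hZ₁ne (edgesIn_localComp hE u) ((Finset.erase_subset _ _).trans hZS)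
      refine ⟨H, v, Relation.ReflTransGen.head (VMStep.lc A G u (hSA (hZS huZ))) hchain,
        hEH, Finset.mem_of_mem_erase hvZ, ?_⟩
      intro b hadj
      rcases hb b hadj with hbZ | hbD
      · exact Or.inl (Finset.mem_of_mem_erase hbZ)
      · by_cases hbZ' : b ∈ Z
        · exact Or.inl hbZ'
        · right
          rw [mem_DGs] at hbD ⊢
          rw [step_mem hY huZ b, chi_neg hbZ', mul_zero, add_zero] at hbD
          exact hbD
    · by_cases hN : ∀ b, G.Adj u b → b ∈ Z ∨ b ∈ DGs G Z
      · -- case B : done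
        exact ⟨G, u, Relation.ReflTransGen.refl, hE, huZ, hN⟩
      · -- case C : LC at w then at u
        push_neg at hN
        obtain ⟨w, hadj_uw, hwZ, hwD⟩ := hN
        have hwS : w ∈ S := (hE hadj_uw).2
        set G₁ := localComp G w with hG₁
        have hstep1 : ∀ b, dpar G₁ Z b = dpar G Z b + chi (G.Adj w b) * chi (b ∈ Z) :=
          step_not_mem hwD
        have hu1 : u ∈ DGs G₁ Z := by
          rw [mem_DGs, hstep1 u, not_mem_DGs hY, zero_add,
            chi_pos hadj_uw.symm, chi_pos huZ]
          decide
        have hd1 : dpar G₁ Z u = 1 := mem_DGs.mp hu1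
        obtain ⟨z₀, hz₀Z, hz₀adj⟩ := dpar_exists_adj (by rw [hd1]; exact one_ne_zero)
        have hz₀u : z₀ ≠ u := fun h => G₁.loopless.irrefl u (h ▸ hz₀adj)
        set G₂ := localComp G₁ u with hG₂
        set Z₂ := Z.erase u with hZ₂
        have hZ₂ne : Z₂.Nonempty := ⟨z₀, Finset.mem_erase.mpr ⟨hz₀u, hz₀Z⟩⟩
        have hZ₂card : Z₂.card ≤ n := by
          rw [hZ₂, Finset.card_erase_of_mem huZ]; omega
        have hE₁ : EdgesIn G₁ S := edgesIn_localComp hE w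
        have hE₂ : EdgesIn G₂ S := edgesIn_localComp hE₁ u
        obtain ⟨H, v, hchain, hEH, hvZ, hb⟩ :=
          ih G₂ Z₂ hZ₂card hZ₂ne hE₂ ((Finset.erase_subset _ _).trans hZS)
        refine ⟨H, v,
          Relation.ReflTransGen.head (VMStep.lc A G w (hSA hwS))
            (Relation.ReflTransGen.head (VMStep.lc A G₁ u (hSA (hZS huZ))) hchain),
          hEH, Finset.mem_of_mem_erase hvZ, ?_⟩
        intro b hadj
        rcases hb b hadj with hbZ | hbD
        · exact Or.inl (Finset.mem_of_mem_erase hbZ)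
        · by_cases hbZ' : b ∈ Z
          · exact Or.inl hbZ'
          · right
            rw [mem_DGs] at hbD ⊢
            rw [step_mem hu1 huZ b, chi_neg hbZ', mul_zero, add_zero,
              hstep1 b, chi_neg hbZ', mul_zero, add_zero] at hbD
            exact hbD
lemma delete_all : ∀ (n : ℕ) (S A : Finset V) (G : SimpleGraph V), S.card ≤ n → S ⊆ A →
    EdgesIn G S → IsVertexMinor (A, G) (A \ S, (⊥ : SimpleGraph V)) := by
  intro n
  induction n with
  | zero =>
    intro S A G hcard hSA hE
    have hS : S = ∅ := Finset.card_eq_zero.mp (by omega)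
    subst hS
    rw [edgesIn_empty_eq_bot hE, Finset.sdiff_empty]
    exact Relation.ReflTransGen.refl
  | succ n ih =>
    intro S A G hcard hSA hE
    rcases S.eq_empty_or_nonempty with hS | ⟨s, hs⟩
    · subst hS
      rw [edgesIn_empty_eq_bot hE, Finset.sdiff_empty]
      exact Relation.ReflTransGen.refl
    · have hstep := VMStep.del A G s (hSA hs)
      have hE' : EdgesIn (deleteVertex G s) (S.erase s) := edgesIn_deleteVertex hE s
      have hsub : S.erase s ⊆ A.erase s := fun x hx =>
        Finset.mem_erase.mpr ⟨(Finset.mem_erase.mp hx).1, hSA (Finset.mem_of_mem_erase hx)⟩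
      have hcard' : (S.erase s).card ≤ n := by
        rw [Finset.card_erase_of_mem hs]
        have := Finset.card_pos.mpr ⟨s, hs⟩
        omega
      have hrest := ih (S.erase s) (A.erase s) (deleteVertex G s) hcard' hsub hE'
      have hset : A.erase s \ S.erase s = A \ S := by
        ext x
        simp only [Finset.mem_sdiff, Finset.mem_erase]
        constructor
        · rintro ⟨⟨hxs, hxA⟩, hx⟩
          exact ⟨hxA, fun hxS => hx ⟨hxs, hxS⟩⟩
        · rintro ⟨hxA, hxS⟩
          exact ⟨⟨fun h => hxS (h ▸ hs), hxA⟩, fun h => hxS h.2⟩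
      rw [hset] at hrest
      exact Relation.ReflTransGen.head hstep hrest

lemma delete_finset : ∀ (n : ℕ) (B A : Finset V) (G : SimpleGraph V), B.card ≤ n → B ⊆ A →
    ∃ H : SimpleGraph V, IsVertexMinor (A, G) (A \ B, H) ∧
      ∀ a b, H.Adj a b ↔ (G.Adj a b ∧ a ∉ B ∧ b ∉ B) := by
  intro n
  induction n with
  | zero =>
    intro B A G hcard hBA
    have hB : B = ∅ := Finset.card_eq_zero.mp (by omega)
    subst hB
    rw [Finset.sdiff_empty]
    exact ⟨G, Relation.ReflTransGen.refl, by simp⟩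
  | succ n ih =>
    intro B A G hcard hBA
    rcases B.eq_empty_or_nonempty with hB | ⟨s, hs⟩
    · subst hB
      rw [Finset.sdiff_empty]
      exact ⟨G, Relation.ReflTransGen.refl, by simp⟩
    · have hstep := VMStep.del A G s (hBA hs)
      have hsub : B.erase s ⊆ A.erase s := fun x hx =>
        Finset.mem_erase.mpr ⟨(Finset.mem_erase.mp hx).1, hBA (Finset.mem_of_mem_erase hx)⟩
      have hcard' : (B.erase s).card ≤ n := by
        rw [Finset.card_erase_of_mem hs]
        have := Finset.card_pos.mpr ⟨s, hs⟩
        omega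
      obtain ⟨H, hmin, hadj⟩ := ih (B.erase s) (A.erase s) (deleteVertex G s) hcard' hsub
      have hset : A.erase s \ B.erase s = A \ B := by
        ext x
        simp only [Finset.mem_sdiff, Finset.mem_erase]
        constructor
        · rintro ⟨⟨hxs, hxA⟩, hx⟩
          exact ⟨hxA, fun hxB => hx ⟨hxs, hxB⟩⟩
        · rintro ⟨hxA, hxB⟩
          exact ⟨⟨fun h => hxB (h ▸ hs), hxA⟩, fun h => hxB h.2⟩
      rw [hset] at hmin
      refine ⟨H, Relation.ReflTransGen.head hstep hmin, ?_⟩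
      intro a b
      rw [hadj a b]
      unfold deleteVertex
      simp only [Finset.mem_erase]
      constructor
      · rintro ⟨⟨hGab, has, hbs⟩, haB, hbB⟩
        exact ⟨hGab, fun h => haB ⟨has, h⟩, fun h => hbB ⟨hbs, h⟩⟩
      · rintro ⟨hGab, haB, hbB⟩
        have has : a ≠ s := fun h => haB (h ▸ hs)
        have hbs : b ≠ s := fun h => hbB (h ▸ hs)
        exact ⟨⟨hGab, has, hbs⟩, fun h => haB h.2, fun h => hbB h.2⟩
lemma recMain : ∀ (k : ℕ) (A S : Finset V) (G : SimpleGraph V), S ⊆ A → EdgesIn G S →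
    2 ^ k - 1 ≤ S.card →
    ∃ U : Finset V, U ⊆ S ∧ U.card = k ∧
      IsVertexMinor (A, G) ((A \ S) ∪ U, (⊥ : SimpleGraph V)) := by
  intro k
  induction k with
  | zero =>
    intro A S G hSA hE _
    refine ⟨∅, Finset.empty_subset S, Finset.card_empty, ?_⟩
    rw [Finset.union_empty]
    exact delete_all S.card S A G le_rfl hSA hE
  | succ k ih =>
    intro A S G hSA hE hn
    classical
    set n := S.card with hndef
    have hpow : 2 ^ (k + 1) = 2 * 2 ^ k := by rw [pow_succ]; ring
    have h2k : 1 ≤ 2 ^ k := Nat.one_le_two_pow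
    have hn1 : 1 ≤ n := by omega
    set t := n / 2 + 1 with htdef
    have ht : t ≤ n := by omega
    obtain ⟨T, hTS, hTcard⟩ := Finset.exists_subset_card_eq ht
    have hpig : 2 * (S.card - T.card) < S.card := by
      rw [hTcard, ← hndef]; omega
    obtain ⟨Z, hZne, hZT, hDT⟩ := pigeon hE hTS hpig
    obtain ⟨H, v, hchain1, hEH, hvZ, hb⟩ :=
      proc S A hSA Z.card G Z le_rfl hZne hE (hZT.trans hTS)
    set Dv : Finset V := Finset.univ.filter (fun b => H.Adj v b) with hDvdef
    have hDvmem : ∀ b, b ∈ Dv ↔ H.Adj v b := by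
      intro b; simp [hDvdef]
    have hvT : v ∈ T := hZT hvZ
    have hvS : v ∈ S := hTS hvT
    have hDvT : Dv ⊆ T.erase v := by
      intro b hbDv
      have hadj : H.Adj v b := (hDvmem b).mp hbDv
      refine Finset.mem_erase.mpr ⟨hadj.ne', ?_⟩
      rcases hb b hadj with h | h
      · exact hZT h
      · exact hDT h
    have hDvS : Dv ⊆ S := fun x hx => hTS (Finset.mem_of_mem_erase (hDvT hx))
    have hDvA : Dv ⊆ A := hDvS.trans hSA
    have hDvcard : Dv.card ≤ n / 2 := by
      have h1 : Dv.card ≤ (T.erase v).card := Finset.card_le_card hDvT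
      rw [Finset.card_erase_of_mem hvT, hTcard] at h1
      omega
    obtain ⟨H', hchain2, hadj'⟩ := delete_finset Dv.card Dv A H le_rfl hDvA
    have hvnotDv : v ∉ Dv := fun h => H.loopless.irrefl v ((hDvmem v).mp h)
    have hvSD : v ∈ S \ Dv := Finset.mem_sdiff.mpr ⟨hvS, hvnotDv⟩
    set S'' : Finset V := (S \ Dv).erase v with hS''def
    have hS''sub : S'' ⊆ A \ Dv := by
      intro x hx
      have hx' := Finset.mem_of_mem_erase hx
      rw [Finset.mem_sdiff] at hx' ⊢
      exact ⟨hSA hx'.1, hx'.2⟩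
    have hE'' : EdgesIn H' S'' := by
      intro a b hab
      rw [hadj' a b] at hab
      obtain ⟨hHab, haDv, hbDv⟩ := hab
      obtain ⟨haS, hbS⟩ := hEH hHab
      have hav : a ≠ v := by
        intro h; subst h
        exact hbDv ((hDvmem b).mpr hHab)
      have hbv : b ≠ v := by
        intro h; subst h
        exact haDv ((hDvmem a).mpr hHab.symm)
      constructor
      · exact Finset.mem_erase.mpr ⟨hav, Finset.mem_sdiff.mpr ⟨haS, haDv⟩⟩
      · exact Finset.mem_erase.mpr ⟨hbv, Finset.mem_sdiff.mpr ⟨hbS, hbDv⟩⟩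
    have hS''card : 2 ^ k - 1 ≤ S''.card := by
      rw [hS''def, Finset.card_erase_of_mem hvSD, Finset.card_sdiff_of_subset hDvS, ← hndef]
      omega
    obtain ⟨U', hU'sub, hU'card, hmin3⟩ := ih (A \ Dv) S'' H' hS''sub hE'' hS''card
    have hset : ((A \ Dv) \ S'') ∪ U' = (A \ S) ∪ insert v U' := by
      ext x
      constructor
      · intro hx
        rcases Finset.mem_union.mp hx with hx1 | hx2
        · rw [Finset.mem_sdiff] at hx1
          obtain ⟨hxAD, hxnS''⟩ := hx1
          rw [Finset.mem_sdiff] at hxAD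
          by_cases hxv : x = v
          · subst hxv
            exact Finset.mem_union_right _ (Finset.mem_insert_self _ _)
          · by_cases hxS : x ∈ S
            · exact absurd (Finset.mem_erase.mpr
                ⟨hxv, Finset.mem_sdiff.mpr ⟨hxS, hxAD.2⟩⟩) hxnS''
            · exact Finset.mem_union_left _ (Finset.mem_sdiff.mpr ⟨hxAD.1, hxS⟩)
        · exact Finset.mem_union_right _ (Finset.mem_insert_of_mem hx2)
      · intro hx
        rcases Finset.mem_union.mp hx with hx1 | hx2
        · rw [Finset.mem_sdiff] at hx1
          refine Finset.mem_union_left _ (Finset.mem_sdiff.mpr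
            ⟨Finset.mem_sdiff.mpr ⟨hx1.1, fun h => hx1.2 (hDvS h)⟩, ?_⟩)
          intro hS''x
          exact hx1.2 (Finset.mem_sdiff.mp (Finset.mem_of_mem_erase hS''x)).1
        · rcases Finset.mem_insert.mp hx2 with hxv | hxU'
          · subst hxv
            refine Finset.mem_union_left _ (Finset.mem_sdiff.mpr
              ⟨Finset.mem_sdiff.mpr ⟨hSA hvS, hvnotDv⟩, ?_⟩)
            rw [hS''def]
            exact Finset.notMem_erase _ _
          · exact Finset.mem_union_right _ hxU'
    have hvU' : v ∉ U' := fun h => (Finset.mem_erase.mp (hU'sub h)).1 rfl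
    refine ⟨insert v U', ?_, ?_, ?_⟩
    · refine Finset.insert_subset hvS ?_
      intro x hx
      exact Finset.mem_sdiff.mp (Finset.mem_of_mem_erase (hU'sub hx)) |>.1
    · rw [Finset.card_insert_of_notMem hvU', hU'card]
    · have hmin3' : IsVertexMinor (A \ Dv, H') ((A \ S) ∪ insert v U', ⊥) := by
        rw [← hset]; exact hmin3
      exact (hchain1.trans hchain2).trans hmin3'
end main
end dpar

end Aux

/-- For every integer `k ≥ 1`, every finite simple graph on at least `2^k − 1`
vertices contains the edgeless graph on some `k` of its vertices as a
vertex-minor; equivalently, `R_vm(k) ≤ 2^k − 1`. -/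
theorem vm_ramsey_upper (k : ℕ) (hk : 1 ≤ k) (W : Type*) [Fintype W] [DecidableEq W]
    (hW : 2 ^ k - 1 ≤ Fintype.card W) (G : SimpleGraph W) :
    ∃ U : Finset W, U.card = k ∧
      IsVertexMinor (Finset.univ, G) (U, (⊥ : SimpleGraph W)) := by
  have hE : EdgesIn G Finset.univ := fun a b _ => ⟨Finset.mem_univ a, Finset.mem_univ b⟩
  have hcard : 2 ^ k - 1 ≤ (Finset.univ : Finset W).card := by
    rw [Finset.card_univ]; exact hW
  obtain ⟨U, hUsub, hUcard, hmin⟩ :=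
    recMain k Finset.univ Finset.univ G (subset_refl _) hE hcard
  refine ⟨U, hUcard, ?_⟩
  have huniv : (Finset.univ \ Finset.univ : Finset W) ∪ U = U := by
    rw [Finset.sdiff_self, Finset.empty_union]
  rw [huniv] at hmin
  exact hmin
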